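/- Let Z be a positive random variable with cdf H(x) = exp(-δ x^{-ξ}) (Fréchet(δ,ξ)), with ξ > α > 0, δ > 0. Then for any positive reals a_1,...,a_d, E[ (Z^α / H(Z)) · ∏_{i=1}^d H(a_i Z) ] = (Σ_{i=1}^d a_i^{-ξ})^{-1} · (δ Σ_{i=1}^d a_i^{-ξ})^{α/ξ} · Γ(1 - α/ξ). -/

import Mathlib

open MeasureTheory ProbabilityTheory Filter Real
open scoped NNReal ENNReal

/-! Auxiliary lemmas about the substitution `u ↦ δ * u ^ (-ξ)`. -/

private lemma frechet_hasDeriv (δ ξ : ℝ) {s : ℝ} (hs : 0 < s) :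
    HasDerivAt (fun u : ℝ => δ * u ^ (-ξ)) (δ * (-ξ * s ^ (-ξ - 1))) s :=
  (Real.hasDerivAt_rpow_const (p := -ξ) (Or.inl hs.ne')).const_mul δ

private lemma frechet_abs {δ ξ s : ℝ} (hδ : 0 < δ) (hξ : 0 < ξ) (hs : 0 < s) :
    |δ * (-ξ * s ^ (-ξ - 1))| = δ * ξ * s ^ (-ξ - 1) := by
  have h1 : δ * (-ξ * s ^ (-ξ - 1)) = -(δ * ξ * s ^ (-ξ - 1)) := by ring
  rw [h1, abs_neg, abs_of_nonneg]
  exact mul_nonneg (mul_nonneg hδ.le hξ.le) (Real.rpow_nonneg hs.le _)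

private lemma frechet_injOn {δ ξ : ℝ} (hδ : 0 < δ) (hξ : 0 < ξ) :
    Set.InjOn (fun u : ℝ => δ * u ^ (-ξ)) (Set.Ioi 0) := by
  intro s hs t ht h
  have h' : s ^ (-ξ) = t ^ (-ξ) := mul_left_cancel₀ hδ.ne' h
  exact Real.rpow_left_injOn (neg_ne_zero.mpr hξ.ne') (le_of_lt hs : (0:ℝ) ≤ s) (le_of_lt ht : (0:ℝ) ≤ t) h'

private lemma frechet_image_Ioi {δ ξ : ℝ} (hδ : 0 < δ) (hξ : 0 < ξ) :
    (fun u : ℝ => δ * u ^ (-ξ)) '' Set.Ioi 0 = Set.Ioi 0 := by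
  ext t
  simp only [Set.mem_image, Set.mem_Ioi]
  constructor
  · rintro ⟨s, hs, rfl⟩
    exact mul_pos hδ (Real.rpow_pos_of_pos hs _)
  · intro ht
    refine ⟨(t / δ) ^ (-ξ⁻¹), Real.rpow_pos_of_pos (div_pos ht hδ) _, ?_⟩
    rw [← Real.rpow_mul (div_pos ht hδ).le]
    have h1 : -ξ⁻¹ * -ξ = 1 := by field_simp
    rw [h1, Real.rpow_one, mul_div_cancel₀ _ hδ.ne']

private lemma frechet_image_Ioc {δ ξ : ℝ} (hδ : 0 < δ) (hξ : 0 < ξ) {x : ℝ} (hx : 0 < x) :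
    (fun u : ℝ => δ * u ^ (-ξ)) '' Set.Ioc 0 x = Set.Ici (δ * x ^ (-ξ)) := by
  ext t
  simp only [Set.mem_image, Set.mem_Ioc, Set.mem_Ici]
  constructor
  · rintro ⟨s, ⟨hs0, hsx⟩, rfl⟩
    exact mul_le_mul_of_nonneg_left
      (Real.rpow_le_rpow_of_nonpos hs0 hsx (neg_nonpos.mpr hξ.le)) hδ.le
  · intro ht
    have htpos : 0 < t := lt_of_lt_of_le (mul_pos hδ (Real.rpow_pos_of_pos hx _)) ht
    have hcomp : δ * ((t / δ) ^ (-ξ⁻¹)) ^ (-ξ) = t := by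
      rw [← Real.rpow_mul (div_pos htpos hδ).le]
      have h1 : -ξ⁻¹ * -ξ = 1 := by field_simp
      rw [h1, Real.rpow_one, mul_div_cancel₀ _ hδ.ne']
    refine ⟨(t / δ) ^ (-ξ⁻¹), ⟨Real.rpow_pos_of_pos (div_pos htpos hδ) _, ?_⟩, hcomp⟩
    have h1 : x ^ (-ξ) ≤ t / δ := by
      rw [le_div_iff₀ hδ]; linarith [ht]
    have h2 : (t / δ) ^ (-ξ⁻¹) ≤ (x ^ (-ξ)) ^ (-ξ⁻¹) :=
      Real.rpow_le_rpow_of_nonpos (Real.rpow_pos_of_pos hx _) h1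
        (neg_nonpos.mpr (inv_nonneg.mpr hξ.le))
    have h3 : (x ^ (-ξ)) ^ (-ξ⁻¹) = x := by
      rw [← Real.rpow_mul hx.le]
      have h4 : -ξ * -ξ⁻¹ = 1 := by field_simp
      rw [h4, Real.rpow_one]
    linarith [h2, h3.le]

private lemma frechet_cov {δ ξ : ℝ} (hδ : 0 < δ) (hξ : 0 < ξ) {s : Set ℝ}
    (hs : MeasurableSet s) (hss : s ⊆ Set.Ioi 0) (g : ℝ → ℝ) :
    ∫ t in (fun u : ℝ => δ * u ^ (-ξ)) '' s, g t
      = ∫ u in s, δ * ξ * u ^ (-ξ - 1) * g (δ * u ^ (-ξ)) := by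
  rw [integral_image_eq_integral_abs_deriv_smul hs
      (fun u hu => (frechet_hasDeriv δ ξ (hss hu)).hasDerivWithinAt)
      ((frechet_injOn hδ hξ).mono hss) g]
  refine setIntegral_congr_fun hs fun u hu => ?_
  rw [smul_eq_mul, frechet_abs hδ hξ (hss hu)]

private lemma frechet_cov_int {δ ξ : ℝ} (hδ : 0 < δ) (hξ : 0 < ξ) {s : Set ℝ}
    (hs : MeasurableSet s) (hss : s ⊆ Set.Ioi 0) (g : ℝ → ℝ) :
    IntegrableOn g ((fun u : ℝ => δ * u ^ (-ξ)) '' s)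
      ↔ IntegrableOn (fun u => δ * ξ * u ^ (-ξ - 1) * g (δ * u ^ (-ξ))) s := by
  rw [integrableOn_image_iff_integrableOn_abs_deriv_smul hs
      (fun u hu => (frechet_hasDeriv δ ξ (hss hu)).hasDerivWithinAt)
      ((frechet_injOn hδ hξ).mono hss) g]
  refine integrableOn_congr_fun (fun u hu => ?_) hs
  rw [smul_eq_mul, frechet_abs hδ hξ (hss hu)]

private lemma frechet_cdf_int {δ ξ : ℝ} (hδ : 0 < δ) (hξ : 0 < ξ) {x : ℝ} (hx : 0 < x) :
    ∫ u in Set.Ioc 0 x, δ * ξ * u ^ (-ξ - 1) * Real.exp (-(δ * u ^ (-ξ)))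
      = Real.exp (-(δ * x ^ (-ξ))) := by
  have h := frechet_cov (s := Set.Ioc 0 x) hδ hξ measurableSet_Ioc Set.Ioc_subset_Ioi_self
    (fun t => Real.exp (-t))
  rw [frechet_image_Ioc hδ hξ hx] at h
  rw [← h, MeasureTheory.integral_Ici_eq_integral_Ioi, integral_exp_neg_Ioi]

private lemma frechet_cdf_integrable {δ ξ : ℝ} (hδ : 0 < δ) (hξ : 0 < ξ) {x : ℝ} (hx : 0 < x) :
    IntegrableOn (fun u : ℝ => δ * ξ * u ^ (-ξ - 1) * Real.exp (-(δ * u ^ (-ξ))))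
      (Set.Ioc 0 x) := by
  have h := frechet_cov_int (s := Set.Ioc 0 x) hδ hξ measurableSet_Ioc Set.Ioc_subset_Ioi_self
    (fun t => Real.exp (-t))
  rw [frechet_image_Ioc hδ hξ hx] at h
  rw [← h, integrableOn_Ici_iff_integrableOn_Ioi]
  have := exp_neg_integrableOn_Ioi (δ * x ^ (-ξ)) (zero_lt_one)
  simpa using this

private lemma frechet_main_integral {δ ξ α c : ℝ} (hδ : 0 < δ) (hα : 0 < α) (hαξ : α < ξ)
    (hc : 0 < c) :
    ∫ u in Set.Ioi (0 : ℝ), δ * ξ * u ^ (α - ξ - 1) * Real.exp (-(δ * c) * u ^ (-ξ))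
      = c⁻¹ * (δ * c) ^ (α / ξ) * Real.Gamma (1 - α / ξ) := by
  have hξ : 0 < ξ := hα.trans hαξ
  have h := frechet_cov hδ hξ measurableSet_Ioi (le_refl _)
    (fun t => (t / δ) ^ (-(α / ξ)) * Real.exp (-(c * t)))
  rw [frechet_image_Ioi hδ hξ] at h
  have h2 : ∫ u in Set.Ioi (0 : ℝ), δ * ξ * u ^ (α - ξ - 1) * Real.exp (-(δ * c) * u ^ (-ξ))
      = ∫ t in Set.Ioi (0 : ℝ), (t / δ) ^ (-(α / ξ)) * Real.exp (-(c * t)) := by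
    rw [h]
    refine setIntegral_congr_fun measurableSet_Ioi fun u hu => ?_
    have hu' : (0 : ℝ) < u := hu
    have e1 : δ * u ^ (-ξ) / δ = u ^ (-ξ) := by field_simp
    have e2 : (u ^ (-ξ)) ^ (-(α / ξ)) = u ^ α := by
      rw [← Real.rpow_mul hu'.le]
      congr 1
      field_simp
    have e3 : u ^ (α - ξ - 1) = u ^ (-ξ - 1) * u ^ α := by
      rw [← Real.rpow_add hu']
      congr 1
      ring
    have eAB : -(δ * c) * u ^ (-ξ) = -(c * (δ * u ^ (-ξ))) := by ring
    rw [e1, e2, e3, eAB]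
    ring
  rw [h2]
  have h4 : 0 < 1 - α / ξ := by
    have : α / ξ < 1 := (div_lt_one hξ).mpr hαξ
    linarith
  have h3 : ∀ t ∈ Set.Ioi (0 : ℝ),
      (t / δ) ^ (-(α / ξ)) * Real.exp (-(c * t))
        = δ ^ (α / ξ) * (t ^ ((1 - α / ξ) - 1) * Real.exp (-(c * t))) := by
    intro t ht
    have ht' : (0 : ℝ) < t := ht
    rw [Real.div_rpow ht'.le hδ.le, Real.rpow_neg hδ.le, div_eq_mul_inv, inv_inv]
    have e : (1 - α / ξ) - 1 = -(α / ξ) := by ring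
    rw [e]
    ring
  rw [setIntegral_congr_fun measurableSet_Ioi h3, integral_const_mul,
    integral_rpow_mul_exp_neg_mul_Ioi h4 hc]
  have e5 : (1 / c : ℝ) ^ (1 - α / ξ) = c ^ (α / ξ) * c⁻¹ := by
    rw [one_div, Real.inv_rpow hc.le, ← Real.rpow_neg hc.le]
    have e : -(1 - α / ξ) = α / ξ + (-1) := by ring
    rw [e, Real.rpow_add hc, Real.rpow_neg_one]
  have e6 : (δ * c) ^ (α / ξ) = δ ^ (α / ξ) * c ^ (α / ξ) := Real.mul_rpow hδ.le hc.le
  rw [e5, e6]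
  ring

theorem stmt12
    {Ω : Type*} [MeasurableSpace Ω] (μ : Measure Ω) [IsProbabilityMeasure μ]
    (δ ξ α : ℝ) (hδ : 0 < δ) (hα : 0 < α) (hαξ : α < ξ)
    (Z : Ω → ℝ) (hZm : Measurable Z) (hZpos : ∀ᵐ ω ∂μ, 0 < Z ω)
    -- Z is Fréchet(δ, ξ) distributed
    (hcdf : ∀ x > (0 : ℝ), (μ {ω | Z ω ≤ x}).toReal = Real.exp (-δ * x ^ (-ξ)))
    (d : ℕ) (a : Fin d → ℝ) (ha : ∀ i, 0 < a i) :
    ∫ ω, (Z ω ^ α / Real.exp (-δ * Z ω ^ (-ξ))) *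
        ∏ i, Real.exp (-δ * (a i * Z ω) ^ (-ξ)) ∂μ
      = (∑ i, a i ^ (-ξ))⁻¹ * (δ * ∑ i, a i ^ (-ξ)) ^ (α / ξ) *
          Real.Gamma (1 - α / ξ) := by
  have hξ : 0 < ξ := hα.trans hαξ
  set S : ℝ := ∑ i, a i ^ (-ξ) with hSdef
  set dens : ℝ → ℝ := fun u => δ * ξ * u ^ (-ξ - 1) * Real.exp (-(δ * u ^ (-ξ))) with hdensdef
  have hdens_m : Measurable dens := by
    exact ((measurable_id.pow_const _).const_mul _).mul
      (((measurable_id.pow_const _).const_mul δ).neg.exp)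
  have hdens_nonneg : ∀ u : ℝ, 0 < u → 0 ≤ dens u := fun u hu =>
    mul_nonneg (mul_nonneg (mul_nonneg hδ.le hξ.le) (Real.rpow_nonneg hu.le _))
      (Real.exp_nonneg _)
  set f0 : ℝ → ℝ≥0 := fun u => ((Set.Ioi (0:ℝ)).indicator dens u).toNNReal with hf0def
  have hf0_m : Measurable f0 :=
    (hdens_m.indicator measurableSet_Ioi).real_toNNReal
  set ν : Measure ℝ := volume.withDensity (fun u => (f0 u : ℝ≥0∞)) with hνdef
  have hf0coe : ∀ u : ℝ, ((f0 u : ℝ≥0∞)) = ENNReal.ofReal ((Set.Ioi (0:ℝ)).indicator dens u) :=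
    fun u => rfl
  have hZae : AEMeasurable Z μ := hZm.aemeasurable
  haveI : IsProbabilityMeasure (μ.map Z) := Measure.isProbabilityMeasure_map hZae
  -- identify the law of Z
  have hmap : μ.map Z = ν := by
    refine Measure.ext_of_Iic (μ.map Z) ν (fun x => ?_)
    rw [Measure.map_apply hZm measurableSet_Iic]
    have hpre : Z ⁻¹' Set.Iic x = {ω | Z ω ≤ x} := rfl
    have hνx : ν (Set.Iic x) = ∫⁻ u in Set.Iic x, (f0 u : ℝ≥0∞) := by
      rw [hνdef, withDensity_apply _ measurableSet_Iic]
    rcases le_or_gt x 0 with hx | hx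
    · have h1 : μ (Z ⁻¹' Set.Iic x) = 0 := by
        refine measure_mono_null ?_ (by simpa [ae_iff, not_lt] using hZpos)
        intro ω hω
        simp only [Set.mem_preimage, Set.mem_Iic] at hω
        simp only [Set.mem_setOf_eq]
        linarith
      rw [h1, hνx]
      have h2 : ∀ᵐ u ∂(volume.restrict (Set.Iic x)), (f0 u : ℝ≥0∞) = 0 := by
        refine (ae_restrict_iff' measurableSet_Iic).mpr (ae_of_all _ fun u hu => ?_)
        have : u ∉ Set.Ioi (0:ℝ) := by
          simp only [Set.mem_Iic] at hu
          simp only [Set.mem_Ioi, not_lt]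
          linarith
        rw [hf0coe, Set.indicator_of_notMem this, ENNReal.ofReal_zero]
      rw [lintegral_congr_ae h2, lintegral_zero]
    · have h1 : μ (Z ⁻¹' Set.Iic x) = ENNReal.ofReal (Real.exp (-δ * x ^ (-ξ))) := by
        rw [hpre, ← hcdf x hx, ENNReal.ofReal_toReal (measure_ne_top _ _)]
      rw [h1, hνx]
      have h2 : ∫⁻ u in Set.Iic x, (f0 u : ℝ≥0∞)
          = ∫⁻ u in Set.Ioc 0 x, ENNReal.ofReal (dens u) := by
        simp_rw [hf0coe]
        have : ∀ u : ℝ, ENNReal.ofReal ((Set.Ioi (0:ℝ)).indicator dens u)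
            = (Set.Ioi (0:ℝ)).indicator (fun u => ENNReal.ofReal (dens u)) u := by
          intro u
          by_cases hu : u ∈ Set.Ioi (0:ℝ)
          · rw [Set.indicator_of_mem hu, Set.indicator_of_mem hu]
          · rw [Set.indicator_of_notMem hu, Set.indicator_of_notMem hu, ENNReal.ofReal_zero]
        simp_rw [this]
        rw [lintegral_indicator measurableSet_Ioi, Measure.restrict_restrict measurableSet_Ioi,
          Set.Ioi_inter_Iic]
      rw [h2, ← MeasureTheory.ofReal_integral_eq_lintegral_ofReal
        (frechet_cdf_integrable hδ hξ hx)
        ((ae_restrict_iff' measurableSet_Ioc).mpr (ae_of_all _ fun u hu => hdens_nonneg u hu.1)),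
        frechet_cdf_int hδ hξ hx, neg_mul]
  -- rewrite the integrand
  set g : ℝ → ℝ := fun x => x ^ α * Real.exp ((δ - δ * S) * x ^ (-ξ)) with hgdef
  have hg_m : Measurable g := by
    exact (measurable_id.pow_const _).mul
      (((measurable_id.pow_const _).const_mul _).exp)
  have hcong : ∫ ω, (Z ω ^ α / Real.exp (-δ * Z ω ^ (-ξ))) *
      ∏ i, Real.exp (-δ * (a i * Z ω) ^ (-ξ)) ∂μ = ∫ ω, g (Z ω) ∂μ := by
    refine integral_congr_ae ?_
    filter_upwards [hZpos] with ω hω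
    have hprod : ∏ i, Real.exp (-δ * (a i * Z ω) ^ (-ξ))
        = Real.exp (∑ i, -δ * (a i * Z ω) ^ (-ξ)) := (Real.exp_sum _ _).symm
    have hsum : ∑ i, -δ * (a i * Z ω) ^ (-ξ) = -(δ * S) * Z ω ^ (-ξ) := by
      have h1 : ∀ i, -δ * (a i * Z ω) ^ (-ξ) = a i ^ (-ξ) * (-δ * Z ω ^ (-ξ)) := by
        intro i
        rw [Real.mul_rpow (ha i).le hω.le]
        ring
      rw [Finset.sum_congr rfl (fun i _ => h1 i), ← Finset.sum_mul, ← hSdef]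
      ring
    rw [hprod, hsum, hgdef]
    rw [div_eq_mul_inv, ← Real.exp_neg, mul_assoc, ← Real.exp_add]
    congr 2
    ring
  rw [hcong, ← integral_map hZae hg_m.aestronglyMeasurable, hmap, hνdef,
    integral_withDensity_eq_integral_smul hf0_m g]
  have hsmul : ∀ u : ℝ, f0 u • g u = (Set.Ioi (0:ℝ)).indicator (fun u => dens u * g u) u := by
    intro u
    rw [NNReal.smul_def, smul_eq_mul]
    by_cases hu : u ∈ Set.Ioi (0:ℝ)
    · rw [Set.indicator_of_mem hu, hf0def]
      simp only [Set.indicator_of_mem hu]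
      rw [Real.coe_toNNReal _ (hdens_nonneg u hu)]
    · rw [Set.indicator_of_notMem hu, hf0def]
      simp only [Set.indicator_of_notMem hu]
      simp
  simp_rw [hsmul]
  rw [integral_indicator measurableSet_Ioi]
  have hmain : ∫ u in Set.Ioi (0:ℝ), dens u * g u
      = ∫ u in Set.Ioi (0:ℝ), δ * ξ * u ^ (α - ξ - 1) * Real.exp (-(δ * S) * u ^ (-ξ)) := by
    refine setIntegral_congr_fun measurableSet_Ioi fun u hu => ?_
    have hu' : (0 : ℝ) < u := hu
    have e3 : u ^ (α - ξ - 1) = u ^ (-ξ - 1) * u ^ α := by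
      rw [← Real.rpow_add hu']
      congr 1
      ring
    have eexp : Real.exp (-(δ * u ^ (-ξ))) * Real.exp ((δ - δ * S) * u ^ (-ξ))
        = Real.exp (-(δ * S) * u ^ (-ξ)) := by
      rw [← Real.exp_add]
      congr 1
      ring
    rw [hdensdef, hgdef, e3, ← eexp]
    ring
  rw [hmain]
  -- split on whether the sum is zero (i.e. `d = 0`)
  rcases eq_or_lt_of_le (Finset.sum_nonneg fun i _ => Real.rpow_nonneg (ha i).le (-ξ) :
      (0:ℝ) ≤ S) with hS0 | hS0
  · rw [← hSdef] at hS0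
    rw [← hS0]
    simp only [mul_zero, zero_mul, neg_zero, Real.exp_zero, mul_one, inv_zero]
    have : ∀ u : ℝ, δ * ξ * u ^ (α - ξ - 1) = (δ * ξ) * u ^ (α - ξ - 1) := fun u => rfl
    rw [integral_const_mul, setIntegral_Ioi_zero_rpow, mul_zero]
  · exact frechet_main_integral hδ hα hαξ hS0
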